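/- Let M be a real Z-matrix (a square matrix with nonpositive off-diagonal entries). If there exists a vector r with all entries strictly positive such that M·rᵗ = 0ᵗ, then all principal minors of M are non-negative, i.e. M is an M-matrix. -/
import Mathlib

open Matrix Finset

/-- A strictly diagonally dominant real matrix (with sums of absolute values of
off-diagonal entries strictly less than the diagonal entry) has positive determinant. -/
lemma det_pos_of_sdd {m : Type*} [Fintype m] [DecidableEq m]
    (A : Matrix m m ℝ) (h : ∀ i, ∑ j ∈ Finset.univ.erase i, |A i j| < A i i) :
    0 < A.det := by
  set g : ℝ → ℝ := fun t => ((1 - t) • (1 : Matrix m m ℝ) + t • A).det with hg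
  have hcont : Continuous g := by
    apply Continuous.matrix_det
    exact ((continuous_const.sub continuous_id).smul continuous_const).add
      (continuous_id.smul continuous_const)
  have hne : ∀ t ∈ Set.Icc (0:ℝ) 1, g t ≠ 0 := by
    intro t ht
    apply det_ne_zero_of_sum_row_lt_diag
    intro k
    have hdiagpos : 0 < A k k := lt_of_le_of_lt (Finset.sum_nonneg fun j _ => abs_nonneg _) (h k)
    have hsum : ∑ j ∈ Finset.univ.erase k, ‖((1 - t) • (1 : Matrix m m ℝ) + t • A) k j‖
        = t * ∑ j ∈ Finset.univ.erase k, |A k j| := by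
      rw [Finset.mul_sum]
      apply Finset.sum_congr rfl
      intro j hj
      have hjk : j ≠ k := Finset.ne_of_mem_erase hj
      simp [Matrix.one_apply_ne' hjk, Real.norm_eq_abs, abs_mul, abs_of_nonneg ht.1]
    have hdiag : ((1 - t) • (1 : Matrix m m ℝ) + t • A) k k = (1 - t) + t * A k k := by
      simp [Matrix.one_apply_eq]
    rw [hsum, hdiag, Real.norm_eq_abs]
    have hle : (1 - t) + t * A k k ≤ |(1 - t) + t * A k k| := le_abs_self _
    refine lt_of_lt_of_le ?_ hle
    rcases eq_or_lt_of_le ht.1 with h0 | h0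
    · simp only [← h0]
      simp
    · have : t * ∑ j ∈ Finset.univ.erase k, |A k j| < t * A k k :=
        (mul_lt_mul_iff_right₀ h0).mpr (h k)
      nlinarith [ht.2]
  have hg0 : g 0 = 1 := by simp [hg]
  have hg1 : g 1 = A.det := by simp [hg]
  by_contra hcon
  push_neg at hcon
  have hlt : A.det < 0 := lt_of_le_of_ne hcon (by rw [← hg1]; exact hne 1 (by norm_num))
  have : (0:ℝ) ∈ Set.Icc (g 1) (g 0) := by
    constructor
    · rw [hg1]; exact hlt.le
    · rw [hg0]; exact zero_le_one
  obtain ⟨t, ht, hgt⟩ := intermediate_value_Icc' (zero_le_one) hcont.continuousOn this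
  exact hne t ht hgt

/-- A Z-matrix which maps a positive vector to a nonnegative vector has nonneg det. -/
lemma det_nonneg_of_Z {m : Type*} [Fintype m] [DecidableEq m]
    (A : Matrix m m ℝ) (hZ : ∀ i j, i ≠ j → A i j ≤ 0)
    (x : m → ℝ) (hx : ∀ i, 0 < x i) (hAx : ∀ i, 0 ≤ A.mulVec x i) :
    0 ≤ A.det := by
  set B : ℝ → Matrix m m ℝ := fun ε => A * Matrix.diagonal x + ε • 1 with hB
  have hpos : ∀ ε : ℝ, 0 < ε → 0 < (B ε).det := by
    intro ε hε
    apply det_pos_of_sdd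
    intro i
    have hoff : ∀ j ∈ Finset.univ.erase i, |B ε i j| = -(A i j * x j) := by
      intro j hj
      have hji : j ≠ i := Finset.ne_of_mem_erase hj
      have : B ε i j = A i j * x j := by
        simp [hB, Matrix.mul_diagonal, Matrix.one_apply_ne' hji]
      rw [this, abs_of_nonpos]
      exact mul_nonpos_of_nonpos_of_nonneg (hZ i j hji.symm) (hx j).le
    rw [Finset.sum_congr rfl hoff]
    have hdiag : B ε i i = A i i * x i + ε := by
      simp [hB, Matrix.mul_diagonal, Matrix.one_apply_eq]
    rw [hdiag]
    have hsum : ∑ j ∈ Finset.univ.erase i, -(A i j * x j)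
        = A i i * x i - A.mulVec x i := by
      rw [Finset.sum_neg_distrib]
      have := Finset.sum_erase_eq_sub (f := fun j => A i j * x j) (Finset.mem_univ i)
      rw [this]
      have : A.mulVec x i = ∑ j, A i j * x j := rfl
      rw [this]; ring
    rw [hsum]
    have := hAx i
    linarith
  have hlim : Filter.Tendsto (fun ε => (B ε).det) (nhdsWithin 0 (Set.Ioi 0))
      (nhds ((B 0).det)) := by
    have : Continuous fun ε : ℝ => (B ε).det := by
      apply Continuous.matrix_det
      exact continuous_const.add (continuous_id.smul continuous_const)
    exact this.continuousAt.continuousWithinAt.tendsto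
  have h0 : 0 ≤ (B 0).det := by
    refine ge_of_tendsto hlim ?_
    filter_upwards [self_mem_nhdsWithin] with ε hε
    exact (hpos ε hε).le
  have hB0 : (B 0).det = A.det * ∏ i, x i := by
    simp [hB, Matrix.det_mul, Matrix.det_diagonal]
  rw [hB0] at h0
  have hprod : 0 < ∏ i, x i := Finset.prod_pos fun i _ => hx i
  nlinarith

/-- The principal minor of `M` indexed by the subset `s`. -/
noncomputable def principalMinor {n : ℕ} (M : Matrix (Fin n) (Fin n) ℝ)
    (s : Finset (Fin n)) : ℝ :=
  (M.submatrix (fun i : s => (i : Fin n)) (fun j : s => (j : Fin n))).det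

/-- a Z-matrix with a positive vector in its kernel is an M-matrix. -/
theorem stmt_3 (n : ℕ) (M : Matrix (Fin n) (Fin n) ℝ)
    (hZ : ∀ i j, i ≠ j → M i j ≤ 0)
    (r : Fin n → ℝ) (hr : ∀ i, 0 < r i) (hker : M.mulVec r = 0) :
    ∀ s : Finset (Fin n), 0 ≤ principalMinor M s := by
  intro s
  unfold principalMinor
  apply det_nonneg_of_Z
  · intro i j hij
    exact hZ i j (fun h => hij (Subtype.ext h))
  · exact fun i => hr i
  · intro i
    have hsplit : (0:ℝ) = ∑ j ∈ s, M i j * r j + ∑ j ∈ Finset.univ \ s, M i j * r j := by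
      rw [Finset.sum_sdiff_eq_sub (Finset.subset_univ s)]
      have : M.mulVec r i = ∑ j, M i j * r j := rfl
      have h0 : ∑ j, M (i : Fin n) j * r j = 0 := by
        rw [← this, hker]; rfl
      rw [h0]; ring
    have hrest : ∑ j ∈ Finset.univ \ s, M i j * r j ≤ 0 := by
      apply Finset.sum_nonpos
      intro j hj
      have hjs : j ∉ s := (Finset.mem_sdiff.mp hj).2
      have hij : (i : Fin n) ≠ j := fun h => hjs (h ▸ i.2)
      exact mul_nonpos_of_nonpos_of_nonneg (hZ i j hij) (hr j).le
    have hmv : (M.submatrix (fun i : s => (i : Fin n)) (fun j : s => (j : Fin n))).mulVec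
        (fun j : s => r j) i = ∑ j ∈ s, M i j * r j := by
      rw [Matrix.mulVec]
      simp only [dotProduct, Matrix.submatrix_apply]
      exact Finset.sum_coe_sort s (fun j => M i j * r j)
    rw [hmv]
    linarith
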